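/- For every integer n ≥ 2 and every x ∈ (0,1), V_n(x) = 1 - x/2 - (x²/(2(n+1)))·Σ_{k=1}^{⌊n/2⌋} sin²(2πk/(n+1))/(1 - x·cos²(πk/(n+1))). -/

import Mathlib

noncomputable def V (x : ℝ) : ℕ → ℝ
  | 0 => 1
  | n + 1 => (1 - x + V x n) / (1 + V x n)

open Complex Finset

lemma zeta_pow_ne_one (N : ℕ) (j : ℕ) (hj0 : 0 < j) (hjN : j < N) :
    Complex.exp (2 * Real.pi * Complex.I / N) ^ j ≠ 1 := by
  have hN0 : (N : ℂ) ≠ 0 := Nat.cast_ne_zero.mpr (by omega)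
  rw [← Complex.exp_nat_mul]
  intro h
  obtain ⟨z, hz⟩ := Complex.exp_eq_one_iff.mp h
  have h2 : (j : ℂ) * (2 * Real.pi * Complex.I) = ((z : ℂ) * N) * (2 * Real.pi * Complex.I) := by
    field_simp at hz
    linear_combination (2 * Real.pi * Complex.I) * hz
  have h3 : (j : ℂ) = (z : ℂ) * N := mul_right_cancel₀ Complex.two_pi_I_ne_zero h2
  have h4 : (j : ℤ) = z * N := by exact_mod_cast h3
  rcases le_or_gt z 0 with hz0 | hz0
  · nlinarith [h4, (show (0:ℤ) < j by exact_mod_cast hj0), (show (0:ℤ) ≤ (N:ℤ) by positivity)]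
  · nlinarith [h4, (show (j:ℤ) < N by exact_mod_cast hjN)]

lemma sum_inv_exp_sub (M : ℕ) (c : ℂ) (hc : c ^ (M+1) ≠ 1) :
    ∑ k ∈ Finset.range (M+1), (Complex.exp (2 * Real.pi * Complex.I * k / (M+1)) - c)⁻¹
      = (M+1) * c ^ M / (1 - c ^ (M+1)) := by
  set N := M + 1 with hN
  have hN0 : (N : ℂ) ≠ 0 := Nat.cast_ne_zero.mpr (by omega)
  set ζ : ℂ := Complex.exp (2 * Real.pi * Complex.I / N) with hζ
  have hw : ∀ k : ℕ, Complex.exp (2 * Real.pi * Complex.I * k / N) = ζ ^ k := by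
    intro k
    rw [hζ, ← Complex.exp_nat_mul]
    congr 1
    field_simp
  have hζN : ζ ^ N = 1 := by
    rw [hζ, ← Complex.exp_nat_mul, mul_div_assoc', mul_comm (N:ℂ), mul_div_assoc,
      div_self hN0, mul_one]
    exact Complex.exp_two_pi_mul_I
  have h1c : (1 : ℂ) - c ^ N ≠ 0 := fun h => hc (by linear_combination -h)
  have hterm : ∀ k : ℕ, (ζ ^ k - c)⁻¹
      = (∑ j ∈ Finset.range N, (ζ ^ j) ^ k * c ^ (N - 1 - j)) / (1 - c ^ N) := by
    intro k
    have hgs := geom_sum₂_mul (ζ ^ k) c N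
    have hpow : (ζ ^ k) ^ N = 1 := by rw [← pow_mul, mul_comm, pow_mul, hζN, one_pow]
    rw [hpow] at hgs
    have hne : ζ ^ k - c ≠ 0 := by
      intro h
      exact hc (by rw [← hpow]; congr 1; exact (sub_eq_zero.mp h).symm)
    have hconv : ∀ j ∈ Finset.range N, (ζ ^ k) ^ j * c ^ (N-1-j) = (ζ ^ j) ^ k * c ^ (N-1-j) := by
      intro j _
      rw [← pow_mul, ← pow_mul, Nat.mul_comm k j]
    rw [← Finset.sum_congr rfl hconv, eq_div_iff h1c, ← hgs]
    field_simp
  calc ∑ k ∈ Finset.range N, (Complex.exp (2 * Real.pi * Complex.I * k / (M+1)) - c)⁻¹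
      = ∑ k ∈ Finset.range N, (∑ j ∈ Finset.range N, (ζ ^ j) ^ k * c ^ (N - 1 - j)) / (1 - c ^ N) := by
        refine Finset.sum_congr rfl fun k _ => ?_
        rw [show ((M:ℂ)+1) = (N:ℂ) by push_cast [hN]; ring, hw k, hterm k]
    _ = (∑ j ∈ Finset.range N, (∑ k ∈ Finset.range N, (ζ ^ j) ^ k) * c ^ (N - 1 - j)) / (1 - c ^ N) := by
        rw [← Finset.sum_div]
        congr 1
        rw [Finset.sum_comm]
        refine Finset.sum_congr rfl fun j _ => ?_
        rw [Finset.sum_mul]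
    _ = (M+1) * c ^ M / (1 - c ^ (M+1)) := by
        congr 1
        rw [Finset.sum_eq_single 0]
        · simp [hN]
        · intro j hj hj0
          have hζj : ζ ^ j ≠ 1 := zeta_pow_ne_one N j (Nat.pos_of_ne_zero hj0) (Finset.mem_range.mp hj)
          rw [geom_sum_eq hζj, ← pow_mul, mul_comm j, pow_mul, hζN, one_pow]
          simp
        · intro h
          simp at h

set_option maxHeartbeats 2000000 in
lemma sum_inv_a_sub_cos (M : ℕ) (s : ℝ) (hs0 : 0 < s) (hs1 : s < 1) :
    ∑ k ∈ Finset.range (M+1), ((1+s^2)/(1-s^2) - Real.cos (2*Real.pi*k/(M+1)))⁻¹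
      = ((M+1) * (1-s^2) / (2*s)) *
        (((1+s)^(M+1) + (1-s)^(M+1)) / ((1+s)^(M+1) - (1-s)^(M+1))) := by
  have h1s : (0:ℝ) < 1 - s := by linarith
  have h1s' : (0:ℝ) < 1 + s := by linarith
  set r : ℝ := (1+s)/(1-s) with hr
  have hr1 : 1 < r := by rw [hr, lt_div_iff₀ h1s]; linarith
  have hr0 : 0 < r := by linarith
  have hN0 : ((M:ℝ)+1) ≠ 0 := by positivity
  have hrpow : 1 < r^(M+1) := one_lt_pow₀ hr1 (by omega)
  have hripow : (r⁻¹)^(M+1) < 1 := pow_lt_one₀ (by positivity) (by rw [inv_lt_one_iff₀]; right; exact hr1) (by omega)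
  have hripow0 : (0:ℝ) < (r⁻¹)^(M+1) := by positivity
  -- complex quantities
  set R : ℂ := (r : ℂ) with hR
  have hR0 : R ≠ 0 := by rw [hR]; exact_mod_cast hr0.ne'
  have hRi : R⁻¹ = ((r⁻¹ : ℝ) : ℂ) := by push_cast; ring
  have hcR : R ^ (M+1) ≠ 1 := by
    intro h
    have : (r:ℝ)^(M+1) = 1 := by exact_mod_cast (hR ▸ h : ((r:ℂ))^(M+1) = 1)
    linarith
  have hcRi : (R⁻¹) ^ (M+1) ≠ 1 := by
    rw [hRi]
    intro h
    have : ((r:ℝ)⁻¹)^(M+1) = 1 := by exact_mod_cast h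
    linarith
  -- per-term rewrite into complex
  have key : ∀ k ∈ Finset.range (M+1),
      (((1+s^2)/(1-s^2) - Real.cos (2*Real.pi*k/(M+1)) : ℝ) : ℂ)⁻¹
        = (2/(R-R⁻¹)) * (R⁻¹*(Complex.exp (2*Real.pi*Complex.I*k/(M+1)) - R⁻¹)⁻¹
            - R*(Complex.exp (2*Real.pi*Complex.I*k/(M+1)) - R)⁻¹) := by
    intro k _
    set w : ℂ := Complex.exp (2*Real.pi*Complex.I*k/(M+1)) with hwdef
    have hw1 : ‖w‖ = 1 := by
      rw [hwdef, show (2*Real.pi*Complex.I*k/(M+1) : ℂ) = ((2*Real.pi*k/(M+1) : ℝ) : ℂ) * Complex.I by push_cast; ring]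
      exact Complex.norm_exp_ofReal_mul_I _
    have hw0 : w ≠ 0 := by
      intro h; rw [h] at hw1; simp at hw1
    have hwR : w - R ≠ 0 := by
      intro h
      have : ‖R‖ = 1 := by rw [← sub_eq_zero.mp h]; exact hw1
      rw [hR, Complex.norm_real, Real.norm_eq_abs] at this
      rw [abs_of_pos hr0] at this; linarith
    have hwRi : w - R⁻¹ ≠ 0 := by
      intro h
      have : ‖R⁻¹‖ = 1 := by rw [← sub_eq_zero.mp h]; exact hw1
      rw [hRi, Complex.norm_real, Real.norm_eq_abs, abs_of_pos (by positivity)] at this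
      have : r = 1 := by
        field_simp at this; linarith
      linarith
    have hRR : R - R⁻¹ ≠ 0 := by
      rw [hR, hRi]
      intro h
      have : (r:ℝ) - r⁻¹ = 0 := by exact_mod_cast h
      have : r^2 = 1 := by field_simp at this; nlinarith
      nlinarith
    have hcos : (((Real.cos (2*Real.pi*k/(M+1)) : ℝ)) : ℂ) = (w + w⁻¹)/2 := by
      rw [Complex.ofReal_cos]
      show (Complex.exp (_ * Complex.I) + Complex.exp (-_ * Complex.I))/2 = _
      rw [hwdef]
      congr 2
      · congr 1; push_cast; ring
      · rw [← Complex.exp_neg]; congr 1; push_cast; ring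
    have ha : (((1+s^2)/(1-s^2) : ℝ) : ℂ) = (R + R⁻¹)/2 := by
      rw [hR, hRi, hr]
      have h2 : ((1:ℝ)-s) ≠ 0 := h1s.ne'
      have h3 : ((1:ℝ)+s) ≠ 0 := h1s'.ne'
      push_cast
      rw [inv_div]
      have hc2 : ((1:ℂ)-s) ≠ 0 := by exact_mod_cast h2
      have hc3 : ((1:ℂ)+s) ≠ 0 := by exact_mod_cast h3
      have hc4 : ((1:ℂ)-s^2) ≠ 0 := by
        have : ((1:ℂ)-s^2) = (1-s)*(1+s) := by ring
        rw [this]; exact mul_ne_zero hc2 hc3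
      field_simp
      ring
    rw [Complex.ofReal_sub, hcos, ha]
    have hfactor : (R + R⁻¹)/2 - (w + w⁻¹)/2 = (R - w)*(w - R⁻¹)/(2*w) := by
      field_simp
      ring
    have hwRi2 : R*w - 1 ≠ 0 := by
      intro h
      apply hwRi
      have : R * (w - R⁻¹) = 0 := by
        rw [mul_sub, mul_inv_cancel₀ hR0]; exact h
      rcases mul_eq_zero.mp this with h'|h'
      · exact absurd h' hR0
      · exact absurd h' hwRi
    have hR2 : R^2 - 1 ≠ 0 := by
      intro h
      apply hRR
      have : R * (R - R⁻¹) = 0 := by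
        rw [mul_sub, mul_inv_cancel₀ hR0]; linear_combination h
      rcases mul_eq_zero.mp this with h'|h'
      · exact absurd h' hR0
      · exact h'
    have hsub1 : w - R⁻¹ = (R*w-1)/R := by field_simp
    have hsub2 : R - R⁻¹ = (R^2-1)/R := by field_simp
    rw [hfactor, inv_div, hsub1, hsub2, inv_div]
    rw [show w - R = -(R - w) by ring]
    have hRw : R - w ≠ 0 := by intro h; apply hwR; linear_combination -h
    have hwRi3 : -1 + w*R ≠ 0 := by intro h; apply hwRi2; linear_combination h
    field_simp
    have hX : (-1 + w*R)⁻¹ * (-1 + w*R) = 1 := inv_mul_cancel₀ hwRi3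
    linear_combination R * hX
  have hsum2 := sum_inv_exp_sub M R hcR
  have hsum1 := sum_inv_exp_sub M R⁻¹ hcRi
  have hpow : (1-s)^(M+1) < (1+s)^(M+1) := by
    apply pow_lt_pow_left₀ (by linarith) (by linarith) (by omega)
  have hreal : (2/(r-r⁻¹))*(r⁻¹*(((M:ℝ)+1)*(r⁻¹)^M/(1-(r⁻¹)^(M+1))) -
        r*(((M:ℝ)+1)*r^M/(1-r^(M+1))))
      = ((M:ℝ)+1) * (1-s^2) / (2*s) *
        (((1+s)^(M+1) + (1-s)^(M+1)) / ((1+s)^(M+1) - (1-s)^(M+1))) := by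
    have h1 : r - r⁻¹ ≠ 0 := by
      have : r⁻¹ < 1 := by rw [inv_lt_one_iff₀]; right; exact hr1
      intro h; nlinarith
    have h2 : 1 - (r⁻¹)^(M+1) ≠ 0 := by intro h; nlinarith
    have h3 : 1 - r^(M+1) ≠ 0 := by intro h; nlinarith
    have h4 : (1+s)^(M+1) - (1-s)^(M+1) ≠ 0 := by intro h; nlinarith
    have h5 : ((1:ℝ)+s) ≠ 0 := by positivity
    have h6 : ((1:ℝ)-s) ≠ 0 := by intro h; nlinarith
    have hu : ((1:ℝ)+s)^M ≠ 0 := by positivity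
    have hv : ((1:ℝ)-s)^M ≠ 0 := ne_of_gt (pow_pos h1s M)
    have hri : r⁻¹ = (1-s)/(1+s) := by rw [hr, inv_div]
    have hrim1 : (r⁻¹)^(M+1) = ((1-s)^M*(1-s))/((1+s)^M*(1+s)) := by
      rw [hri, div_pow, pow_succ, pow_succ]
    have hrm1 : r^(M+1) = ((1+s)^M*(1+s))/((1-s)^M*(1-s)) := by
      rw [hr, div_pow, pow_succ, pow_succ]
    have hrim : (r⁻¹)^M = (1-s)^M/(1+s)^M := by rw [hri, div_pow]
    have hrm : r^M = (1+s)^M/(1-s)^M := by rw [hr, div_pow]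
    rw [hrim1, hrim, hrm1, hrm, hri, hr, pow_succ (1+s), pow_succ (1-s)]
    have hlt : (1-s)^M*(1-s) < (1+s)^M*(1+s) := by
      rw [← pow_succ, ← pow_succ]; exact hpow
    have hne : (1+s)^M*(1+s) - (1-s)^M*(1-s) ≠ 0 := by intro h; nlinarith
    generalize (1+s)^M = u at hu hlt hne ⊢
    generalize (1-s)^M = v at hv hlt hne ⊢
    have e0 : (1+s)/(1-s) - ((1-s)/(1+s)) = 4*s/((1-s)*(1+s)) := by
      field_simp; ring
    have e1 : 1 - v*(1-s)/(u*(1+s)) = (u*(1+s) - v*(1-s))/(u*(1+s)) := by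
      field_simp
    have e2 : 1 - u*(1+s)/(v*(1-s)) = -(u*(1+s) - v*(1-s))/(v*(1-s)) := by
      field_simp
      ring
    rw [e0, e1, e2]
    generalize u*(1+s) - v*(1-s) = C at hne ⊢
    field_simp
    ring
  apply Complex.ofReal_injective
  rw [Complex.ofReal_sum]
  simp only [Complex.ofReal_inv]
  rw [Finset.sum_congr rfl key, ← Finset.mul_sum, Finset.sum_sub_distrib,
    ← Finset.mul_sum, ← Finset.mul_sum, hsum1, hsum2, ← hreal]
  push_cast
  ring

lemma sum_range_reflect_even (m : ℕ) (g : ℕ → ℝ)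
    (hg : ∀ k, 1 ≤ k → k ≤ 2*m → g (2*m+1-k) = g k) :
    ∑ k ∈ Finset.range (2*m+1), g k = g 0 + 2 * ∑ k ∈ Finset.Icc 1 m, g k := by
  have h0 : Finset.range (2*m+1) = insert 0 (Finset.Icc 1 (2*m)) := by
    ext j; simp only [Finset.mem_range, Finset.mem_Icc, Finset.mem_insert]; omega
  rw [h0, Finset.sum_insert (by simp)]
  congr 1
  rw [show Finset.Icc 1 (2*m) = Finset.Ioc 0 (2*m) from by
        ext j; simp only [Finset.mem_Icc, Finset.mem_Ioc]; omega,
      show Finset.Icc 1 m = Finset.Ioc 0 m from by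
        ext j; simp only [Finset.mem_Icc, Finset.mem_Ioc]; omega]
  rw [← Finset.sum_Ioc_consecutive g (Nat.zero_le m) (by omega : m ≤ 2*m)]
  have h3 : ∑ k ∈ Finset.Ioc m (2*m), g k = ∑ k ∈ Finset.Ioc 0 m, g k := by
    apply Finset.sum_nbij' (i := fun k => 2*m+1-k) (j := fun k => 2*m+1-k)
    · intro a ha; simp only [Finset.mem_Ioc] at *; omega
    · intro a ha; simp only [Finset.mem_Ioc] at *; omega
    · intro a ha; simp only [Finset.mem_Ioc] at ha; omega
    · intro a ha; simp only [Finset.mem_Ioc] at ha; omega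
    · intro a ha; simp only [Finset.mem_Ioc] at ha
      exact (hg a (by omega) (by omega)).symm
  rw [h3]; ring

lemma sum_range_reflect_odd (m : ℕ) (g : ℕ → ℝ)
    (hg : ∀ k, 1 ≤ k → k ≤ 2*m+1 → g (2*m+2-k) = g k) :
    ∑ k ∈ Finset.range (2*m+2), g k = g 0 + g (m+1) + 2 * ∑ k ∈ Finset.Icc 1 m, g k := by
  have h0 : Finset.range (2*m+2) = insert 0 (Finset.Icc 1 (2*m+1)) := by
    ext j; simp only [Finset.mem_range, Finset.mem_Icc, Finset.mem_insert]; omega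
  rw [h0, Finset.sum_insert (by simp)]
  rw [show Finset.Icc 1 (2*m+1) = Finset.Ioc 0 (2*m+1) from by
        ext j; simp only [Finset.mem_Icc, Finset.mem_Ioc]; omega,
      show Finset.Icc 1 m = Finset.Ioc 0 m from by
        ext j; simp only [Finset.mem_Icc, Finset.mem_Ioc]; omega]
  rw [← Finset.sum_Ioc_consecutive g (Nat.zero_le (m+1)) (by omega : m+1 ≤ 2*m+1)]
  rw [← Finset.sum_Ioc_consecutive g (Nat.zero_le m) (by omega : m ≤ m+1)]
  have h1 : ∑ k ∈ Finset.Ioc m (m+1), g k = g (m+1) := by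
    rw [show Finset.Ioc m (m+1) = {m+1} by ext j; simp only [Finset.mem_Ioc, Finset.mem_singleton]; omega]
    simp
  have h3 : ∑ k ∈ Finset.Ioc (m+1) (2*m+1), g k = ∑ k ∈ Finset.Ioc 0 m, g k := by
    apply Finset.sum_nbij' (i := fun k => 2*m+2-k) (j := fun k => 2*m+2-k)
    · intro a ha; simp only [Finset.mem_Ioc] at *; omega
    · intro a ha; simp only [Finset.mem_Ioc] at *; omega
    · intro a ha; simp only [Finset.mem_Ioc] at ha; omega
    · intro a ha; simp only [Finset.mem_Ioc] at ha; omega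
    · intro a ha; simp only [Finset.mem_Ioc] at ha
      exact (hg a (by omega) (by omega)).symm
  rw [h1, h3]; ring

lemma sum_cos_zero (M : ℕ) (hM : 1 ≤ M) :
    ∑ k ∈ Finset.range (M+1), Real.cos (2*Real.pi*k/(M+1)) = 0 := by
  have hN0 : ((M:ℂ)+1) ≠ 0 := by
    intro h
    have h' : ((M:ℝ)+1) = 0 := by exact_mod_cast h
    have : (0:ℝ) < (M:ℝ)+1 := by positivity
    linarith
  set ζ : ℂ := Complex.exp (2 * Real.pi * Complex.I / (M+1)) with hζ
  have hζ1 : ζ ≠ 1 := by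
    have h := zeta_pow_ne_one (M+1) 1 (by omega) (by omega)
    rw [pow_one] at h
    intro hc; apply h
    rw [show ((M+1 : ℕ) : ℂ) = (M:ℂ)+1 by push_cast; ring]
    exact hc
  have hζN : ζ ^ (M+1) = 1 := by
    rw [hζ, ← Complex.exp_nat_mul]
    rw [show ((M+1 : ℕ):ℂ) * (2 * Real.pi * Complex.I / ((M:ℂ)+1)) = 2*Real.pi*Complex.I by
      push_cast; field_simp]
    exact Complex.exp_two_pi_mul_I
  have hζi1 : ζ⁻¹ ≠ 1 := by
    intro h
    apply hζ1
    have := congrArg (fun z => z⁻¹) h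
    simpa using this
  have hζiN : (ζ⁻¹) ^ (M+1) = 1 := by rw [inv_pow, hζN, inv_one]
  have hexp : ∀ k : ℕ, Complex.exp (((2*Real.pi*k/(M+1) : ℝ) : ℂ) * Complex.I) = ζ^k := by
    intro k
    rw [hζ, ← Complex.exp_nat_mul]
    congr 1
    push_cast
    field_simp
  have hcos : ∀ k : ℕ, ((Real.cos (2*Real.pi*k/(M+1)) : ℝ) : ℂ) = (ζ^k + (ζ⁻¹)^k)/2 := by
    intro k
    rw [Complex.ofReal_cos]
    show (Complex.exp (_ * Complex.I) + Complex.exp (-_ * Complex.I))/2 = _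
    congr 2
    · exact hexp k
    · rw [neg_mul, Complex.exp_neg, hexp k, inv_pow]
  apply Complex.ofReal_injective
  rw [Complex.ofReal_sum]
  rw [Finset.sum_congr rfl (fun k _ => hcos k)]
  rw [← Finset.sum_div, Finset.sum_add_distrib, geom_sum_eq hζ1, geom_sum_eq hζi1,
    hζN, hζiN]
  simp

set_option maxHeartbeats 2000000 in
theorem stmt15 (n : ℕ) (hn : 2 ≤ n) (x : ℝ) (hx : x ∈ Set.Ioo (0 : ℝ) 1) :
    V x n = 1 - x / 2 -
      x ^ 2 / (2 * (n + 1)) *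
        ∑ k ∈ Finset.Icc 1 (n / 2),
          Real.sin (2 * Real.pi * k / (n + 1)) ^ 2 /
            (1 - x * Real.cos (Real.pi * k / (n + 1)) ^ 2) := by
  obtain ⟨hx0, hx1⟩ := hx
  set s := Real.sqrt (1-x) with hsdef
  have hs2 : s^2 = 1-x := Real.sq_sqrt (by linarith)
  have hs0 : 0 < s := Real.sqrt_pos.mpr (by linarith)
  have hs1 : s < 1 := by nlinarith
  have hxs : x = 1 - s^2 := by linarith
  have hdpos : ∀ j : ℕ, 1 ≤ j → (0:ℝ) < (1+s)^j - (1-s)^j := by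
    intro j hj
    have := pow_lt_pow_left₀ (show 1-s < 1+s by linarith) (by linarith : (0:ℝ) ≤ 1-s) (by omega : j ≠ 0)
    linarith
  have hVq : ∀ j : ℕ, V x j = ((1+s)^(j+2) - (1-s)^(j+2))/((1+s)^(j+1) - (1-s)^(j+1)) - 1 := by
    intro j
    induction j with
    | zero =>
      show (1:ℝ) = _
      have h1 : (0:ℝ) < (1+s)^1 - (1-s)^1 := hdpos 1 le_rfl
      field_simp
      ring
    | succ j ih =>
      have hd1 : (0:ℝ) < (1+s)^(j+1) - (1-s)^(j+1) := hdpos _ (by omega)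
      have hd2 : (0:ℝ) < (1+s)^(j+2) - (1-s)^(j+2) := hdpos _ (by omega)
      have hd3 : (0:ℝ) < (1+s)^(j+3) - (1-s)^(j+3) := hdpos _ (by omega)
      show (1 - x + V x j) / (1 + V x j) = _
      rw [ih, hxs]
      have h1V : 1 + (((1+s)^(j+2) - (1-s)^(j+2))/((1+s)^(j+1) - (1-s)^(j+1)) - 1)
          = ((1+s)^(j+2) - (1-s)^(j+2))/((1+s)^(j+1) - (1-s)^(j+1)) := by ring
      rw [h1V]
      rw [div_eq_iff (by positivity : ((1+s)^(j+2) - (1-s)^(j+2))/((1+s)^(j+1) - (1-s)^(j+1)) ≠ 0)]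
      field_simp
      ring
  have hNR : (0:ℝ) < (n:ℝ)+1 := by positivity
  have hterm : ∀ k ∈ Finset.Icc 1 (n/2),
      Real.sin (2*Real.pi*k/(n+1))^2 / (1 - x*Real.cos (Real.pi*k/(n+1))^2)
        = (2/x)*(Real.cos (2*Real.pi*k/(n+1)) + (1+s^2)/(1-s^2))
          - (8*s^2/x^3) * ((1+s^2)/(1-s^2) - Real.cos (2*Real.pi*k/(n+1)))⁻¹ := by
    intro k _
    have hc2 : Real.cos (2*Real.pi*k/(n+1)) = 2*Real.cos (Real.pi*k/(n+1))^2 - 1 := by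
      rw [show 2*Real.pi*(k:ℝ)/((n:ℝ)+1) = 2*(Real.pi*k/((n:ℝ)+1)) by ring]
      exact Real.cos_two_mul _
    have hsin : Real.sin (2*Real.pi*k/(n+1))^2 = 1 - Real.cos (2*Real.pi*k/(n+1))^2 :=
      Real.sin_sq _
    set c := Real.cos (Real.pi*k/(n+1)) with hc
    have hc1 : c^2 ≤ 1 := Real.cos_sq_le_one _
    have hden : (0:ℝ) < 1 - x*c^2 := by nlinarith
    rw [hsin, hc2]
    have hx2 : (1:ℝ) - s^2 = x := by linarith
    have ha_c : (1+s^2)/(1-s^2) - (2*c^2 - 1) = 2*(1 - x*c^2)/x := by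
      rw [div_sub' (by rw [hx2]; positivity), hx2]
      congr 1
      nlinarith
    have haval : (1+s^2)/(1-s^2) = (2-x)/x := by
      rw [hx2]; congr 1; linarith
    rw [ha_c, haval, inv_div]
    have hden' := hden.ne'
    rw [hs2]
    field_simp
    have hX : (1 - c^2*x)⁻¹ * (1 - c^2*x) = 1 := inv_mul_cancel₀ (by intro h; apply hden'; linear_combination h)
    linear_combination 8*(1+c^2*x-x)*hX
  set a : ℝ := (1+s^2)/(1-s^2) with hadef
  have h1s2 : (1:ℝ)-s^2 ≠ 0 := by intro h; rw [hxs] at hx0; linarith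
  have hsum_split : ∑ k ∈ Finset.Icc 1 (n/2),
        Real.sin (2*Real.pi*k/(n+1))^2 / (1 - x*Real.cos (Real.pi*k/(n+1))^2)
      = (2/x)*((∑ k ∈ Finset.Icc 1 (n/2), Real.cos (2*Real.pi*k/(n+1))) + (n/2 : ℕ)*a)
        - (8*s^2/x^3) * ∑ k ∈ Finset.Icc 1 (n/2), (a - Real.cos (2*Real.pi*k/(n+1)))⁻¹ := by
    rw [Finset.sum_congr rfl hterm, Finset.sum_sub_distrib, ← Finset.mul_sum, ← Finset.mul_sum,
      Finset.sum_add_distrib, Finset.sum_const, Nat.card_Icc, nsmul_eq_mul]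
    norm_num
  have hrefl : ∀ k, 1 ≤ k → k ≤ n →
      Real.cos (2*Real.pi*((n+1-k : ℕ))/(n+1)) = Real.cos (2*Real.pi*k/(n+1)) := by
    intro k h1 h2
    have hcast : ((n+1-k : ℕ) : ℝ) = (n:ℝ)+1-k := by
      rw [Nat.cast_sub (by omega : k ≤ n+1)]; push_cast; ring
    rw [hcast, show 2*Real.pi*((n:ℝ)+1-k)/((n:ℝ)+1) = 2*Real.pi - 2*Real.pi*k/((n:ℝ)+1) by
      field_simp]
    rw [Real.cos_sub]
    simp [Real.cos_two_pi, Real.sin_two_pi]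
  have hF := sum_inv_a_sub_cos n s hs0 hs1
  have hg2refl : ∀ k, 1 ≤ k → k ≤ n →
      (a - Real.cos (2*Real.pi*((n+1-k : ℕ))/(n+1)))⁻¹ = (a - Real.cos (2*Real.pi*k/(n+1)))⁻¹ := by
    intro k h1 h2; rw [hrefl k h1 h2]
  have hcos0 : Real.cos (2*Real.pi*(0:ℕ)/(n+1)) = 1 := by norm_num
  rcases Nat.even_or_odd n with he | ho
  · -- even case
    obtain ⟨m, hm⟩ := he
    have hm2 : n = 2*m := by omega
    have hmd : n/2 = m := by omega
    have hσ : ∑ k ∈ Finset.Icc 1 m, Real.cos (2*Real.pi*k/(n+1)) = -1/2 := by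
      have hfold := sum_range_reflect_even m (fun k => Real.cos (2*Real.pi*k/(n+1)))
        (fun k hk1 hk2 => by
          rw [show 2*m+1-k = n+1-k by omega]
          exact hrefl k hk1 (by omega))
      have hfull := sum_cos_zero n (by omega)
      rw [show Finset.range (n+1) = Finset.range (2*m+1) by rw [hm2]] at hfull
      rw [hfull] at hfold
      simp only [hcos0] at hfold
      linarith
    have hW : ∑ k ∈ Finset.Icc 1 m, (a - Real.cos (2*Real.pi*k/(n+1)))⁻¹
        = (((n:ℝ)+1) * (1-s^2) / (2*s) *
            (((1+s)^(n+1) + (1-s)^(n+1)) / ((1+s)^(n+1) - (1-s)^(n+1))) - (a - 1)⁻¹)/2 := by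
      have hfold := sum_range_reflect_even m (fun k => (a - Real.cos (2*Real.pi*k/(n+1)))⁻¹)
        (fun k hk1 hk2 => by
          rw [show 2*m+1-k = n+1-k by omega]
          exact hg2refl k hk1 (by omega))
      rw [show Finset.range (2*m+1) = Finset.range (n+1) by rw [hm2], hF] at hfold
      simp only [hcos0] at hfold
      linarith
    rw [hVq n, hsum_split, hmd, hσ, hW]
    have hncast : (n:ℝ) = 2*(m:ℝ) := by rw [hm2]; push_cast; ring
    have ham1 : a - 1 = 2*s^2/(1-s^2) := by rw [hadef]; field_simp; ring
    rw [hxs, hncast, ham1, hadef, inv_div]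
    rw [show n+2 = (n+1)+1 from rfl, pow_succ (1+s) (n+1), pow_succ (1-s) (n+1)]
    have hPQ : (0:ℝ) < (1+s)^(n+1) - (1-s)^(n+1) := hdpos (n+1) (by omega)
    generalize (1+s)^(n+1) = P at hPQ ⊢
    generalize (1-s)^(n+1) = Q at hPQ ⊢
    have hPQ' : P - Q ≠ 0 := hPQ.ne'
    field_simp
    ring
  · -- odd case
    obtain ⟨m, hm⟩ := ho
    have hmd : n/2 = m := by omega
    have hncast : (n:ℝ) = 2*(m:ℝ)+1 := by rw [hm]; push_cast; ring
    have hmid : Real.cos (2*Real.pi*((m+1 : ℕ))/((n:ℝ)+1)) = -1 := by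
      rw [show 2*Real.pi*(((m+1:ℕ)):ℝ)/((n:ℝ)+1) = Real.pi by
        rw [hncast]; push_cast; field_simp; ring]
      exact Real.cos_pi
    have hσ : ∑ k ∈ Finset.Icc 1 m, Real.cos (2*Real.pi*k/(n+1)) = 0 := by
      have hfold := sum_range_reflect_odd m (fun k => Real.cos (2*Real.pi*k/(n+1)))
        (fun k hk1 hk2 => by
          rw [show 2*m+2-k = n+1-k by omega]
          exact hrefl k hk1 (by omega))
      have hfull := sum_cos_zero n (by omega)
      rw [show Finset.range (n+1) = Finset.range (2*m+2) by rw [hm]] at hfull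
      rw [hfull] at hfold
      simp only [hcos0, hmid] at hfold
      linarith
    have hW : ∑ k ∈ Finset.Icc 1 m, (a - Real.cos (2*Real.pi*k/(n+1)))⁻¹
        = (((n:ℝ)+1) * (1-s^2) / (2*s) *
            (((1+s)^(n+1) + (1-s)^(n+1)) / ((1+s)^(n+1) - (1-s)^(n+1)))
           - (a - 1)⁻¹ - (a + 1)⁻¹)/2 := by
      have hfold := sum_range_reflect_odd m (fun k => (a - Real.cos (2*Real.pi*k/(n+1)))⁻¹)
        (fun k hk1 hk2 => by
          rw [show 2*m+2-k = n+1-k by omega]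
          exact hg2refl k hk1 (by omega))
      rw [show Finset.range (2*m+2) = Finset.range (n+1) by rw [hm], hF] at hfold
      simp only [hcos0, hmid] at hfold
      rw [show a - -1 = a + 1 by ring] at hfold
      linarith
    rw [hVq n, hsum_split, hmd, hσ, hW]
    have ham1 : a - 1 = 2*s^2/(1-s^2) := by rw [hadef]; field_simp; ring
    have hap1 : a + 1 = 2/(1-s^2) := by rw [hadef]; field_simp; ring
    rw [hxs, hncast, ham1, hap1, hadef, inv_div, inv_div]
    rw [show n+2 = (n+1)+1 from rfl, pow_succ (1+s) (n+1), pow_succ (1-s) (n+1)]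
    have hPQ : (0:ℝ) < (1+s)^(n+1) - (1-s)^(n+1) := hdpos (n+1) (by omega)
    generalize (1+s)^(n+1) = P at hPQ ⊢
    generalize (1-s)^(n+1) = Q at hPQ ⊢
    have hPQ' : P - Q ≠ 0 := hPQ.ne'
    field_simp
    ring
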